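/- If $Y_1, \ldots, Y_d$ are self-adjoint bounded operators on a Hilbert space such that for every choice of signs $\epsilon \in \{-1,1\}^d$ one has $-I \leq \epsilon_1 Y_1 + \cdots + \epsilon_d Y_d \leq I$, then $0 \leq Y_1^2 + \cdots + Y_d^2 \leq I$. -/

import Mathlib

open scoped ComplexOrder Pointwise

section SumSqAux

variable {H : Type*} [NormedAddCommGroup H] [InnerProductSpace ℂ H] [CompleteSpace H]

private lemma aux_spec_le {a : H →L[ℂ] H} (ha : IsSelfAdjoint a)
    (h1 : -(1 : H →L[ℂ] H) ≤ a) (h2 : a ≤ 1) : ∀ x ∈ spectrum ℝ a, x ^ 2 ≤ 1 := by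
  intro x hx
  have hub : (0:ℝ) ≤ 1 - x := by
    have h' : (0 : H →L[ℂ] H) ≤ 1 - a := sub_nonneg.mpr h2
    have hm : (1 : ℝ) - x ∈ spectrum ℝ ((1 : H →L[ℂ] H) - a) := by
      have h3 : ((1:ℝ) - x) ∈ ({(1:ℝ)} - spectrum ℝ a) :=
        Set.sub_mem_sub (Set.mem_singleton 1) hx
      rwa [spectrum.singleton_sub_eq, map_one] at h3
    exact (StarOrderedRing.nonneg_iff_spectrum_nonneg (R := ℝ) _
      ((IsSelfAdjoint.one _).sub ha)).mp h' _ hm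
  have hlb : (0:ℝ) ≤ 1 + x := by
    have h' : (0 : H →L[ℂ] H) ≤ 1 + a := by
      have h4 : (0 : H →L[ℂ] H) ≤ a - -1 := sub_nonneg.mpr h1
      simpa [sub_neg_eq_add, add_comm] using h4
    have hm : (1 : ℝ) + x ∈ spectrum ℝ ((1 : H →L[ℂ] H) + a) := by
      have h3 : ((1:ℝ) + x) ∈ ({(1:ℝ)} + spectrum ℝ a) :=
        Set.add_mem_add (Set.mem_singleton 1) hx
      rwa [spectrum.singleton_add_eq, map_one] at h3
    exact (StarOrderedRing.nonneg_iff_spectrum_nonneg (R := ℝ) _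
      ((IsSelfAdjoint.one _).add ha)).mp h' _ hm
  nlinarith

private lemma aux_sq_le_one {a : H →L[ℂ] H} (ha : IsSelfAdjoint a)
    (h1 : -(1 : H →L[ℂ] H) ≤ a) (h2 : a ≤ 1) : a ^ 2 ≤ 1 := by
  calc a ^ 2 = cfc (fun x : ℝ => x ^ 2) a := (cfc_pow_id a 2 ha).symm
    _ ≤ 1 := cfc_le_one _ _ (aux_spec_le ha h1 h2)

private noncomputable def sig (b : Bool) : ℝ := if b then 1 else -1

private lemma sig_mul_self (b : Bool) : sig b * sig b = 1 := by cases b <;> simp [sig]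

private lemma sig_not (b : Bool) : sig (!b) = -sig b := by cases b <;> simp [sig]

private lemma sig_sum {d : ℕ} (i j : Fin d) :
    ∑ s : Fin d → Bool, sig (s i) * sig (s j) = if i = j then (2 ^ d : ℝ) else 0 := by
  rcases eq_or_ne i j with rfl | hij
  · simp only [if_pos rfl]
    rw [Finset.sum_congr rfl (fun s _ => sig_mul_self (s i)), Finset.sum_const,
      Finset.card_univ]
    simp [Fintype.card_fun]
  · rw [if_neg hij]
    refine Finset.sum_ninvolution (fun s => Function.update s i (!(s i))) ?_ ?_
      (fun _ => Finset.mem_univ _) ?_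
    · intro s
      simp only [Function.update_self, Function.update_of_ne (Ne.symm hij), sig_not]
      ring
    · intro s _
      intro h
      have := congrFun h i
      simp only [Function.update_self] at this
      exact (s i).not_ne_self this
    · intro s
      funext k
      rcases eq_or_ne k i with rfl | hk
      · simp [Function.update_self]
      · simp [Function.update_of_ne hk]

private lemma key_identity {d : ℕ} (Y : Fin d → H →L[ℂ] H) :
    ∑ s : Fin d → Bool, (∑ i, ((sig (s i) : ℝ) : ℂ) • Y i) ^ 2
      = ((2 ^ d : ℝ) : ℂ) • ∑ i, Y i ^ 2 := by
  have expand : ∀ s : Fin d → Bool,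
      (∑ i, ((sig (s i) : ℝ) : ℂ) • Y i) ^ 2
        = ∑ i, ∑ j, ((sig (s i) * sig (s j) : ℝ) : ℂ) • (Y i * Y j) := by
    intro s
    rw [sq, Finset.sum_mul_sum]
    refine Finset.sum_congr rfl fun i _ => Finset.sum_congr rfl fun j _ => ?_
    rw [smul_mul_smul_comm]
    push_cast
    ring_nf
  calc ∑ s : Fin d → Bool, (∑ i, ((sig (s i) : ℝ) : ℂ) • Y i) ^ 2
      = ∑ s : Fin d → Bool, ∑ i, ∑ j, ((sig (s i) * sig (s j) : ℝ) : ℂ) • (Y i * Y j) :=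
        Finset.sum_congr rfl fun s _ => expand s
    _ = ∑ i, ∑ j, ∑ s : Fin d → Bool, ((sig (s i) * sig (s j) : ℝ) : ℂ) • (Y i * Y j) := by
        rw [Finset.sum_comm]
        exact Finset.sum_congr rfl fun i _ => Finset.sum_comm
    _ = ∑ i, ∑ j, ((if i = j then (2 ^ d : ℝ) else 0 : ℝ) : ℂ) • (Y i * Y j) := by
        refine Finset.sum_congr rfl fun i _ => Finset.sum_congr rfl fun j _ => ?_
        rw [← Finset.sum_smul, ← Complex.ofReal_sum, sig_sum]
    _ = ∑ i, ((2 ^ d : ℝ) : ℂ) • (Y i * Y i) := by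
        refine Finset.sum_congr rfl fun i _ => ?_
        rw [Finset.sum_eq_single i]
        · simp
        · intro j _ hj
          simp [Ne.symm hj]
        · simp
    _ = ((2 ^ d : ℝ) : ℂ) • ∑ i, Y i ^ 2 := by
        rw [Finset.smul_sum]
        exact Finset.sum_congr rfl fun i _ => by rw [sq]

private lemma smul_le_smul_cancel {c : ℝ} (hc : 0 < c) {S : H →L[ℂ] H} (hS : IsSelfAdjoint S)
    (h : ((c : ℂ)) • S ≤ (c : ℂ) • (1 : H →L[ℂ] H)) : S ≤ 1 := by
  rw [ContinuousLinearMap.le_def, ← smul_sub] at h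
  rw [ContinuousLinearMap.le_def]
  obtain ⟨-, hpos⟩ := h
  refine ⟨ContinuousLinearMap.isSelfAdjoint_iff_isSymmetric.mp ((IsSelfAdjoint.one _).sub hS), fun x => ?_⟩
  have h2 := hpos x
  simp only [ContinuousLinearMap.reApplyInnerSelf, ContinuousLinearMap.smul_apply,
    inner_smul_left, Complex.conj_ofReal] at h2 ⊢
  refine nonneg_of_mul_nonneg_right ?_ hc
  convert h2 using 1
  · rfl
  exact (RCLike.re_ofReal_mul c _).symm

end SumSqAux

/-- If `Y 1, …, Y d` are self-adjoint bounded operators on a complex Hilbert space such that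
for every choice of signs `ε ∈ {-1,1}^d` one has `-I ≤ ε 1 • Y 1 + ⋯ + ε d • Y d ≤ I`
(i.e., the joint numerical range lies in the `ℓ¹` unit ball), then
`0 ≤ Y 1 ^ 2 + ⋯ + Y d ^ 2 ≤ I`. -/
theorem sum_sq_le_one_of_signed_sums_le_one
    {H : Type*} [NormedAddCommGroup H] [InnerProductSpace ℂ H] [CompleteSpace H]
    {d : ℕ} (Y : Fin d → H →L[ℂ] H)
    (hsa : ∀ i, IsSelfAdjoint (Y i))
    (hsign : ∀ ε : Fin d → ℝ, (∀ i, ε i = 1 ∨ ε i = -1) →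
      -(1 : H →L[ℂ] H) ≤ ∑ i, (ε i : ℂ) • Y i ∧ ∑ i, (ε i : ℂ) • Y i ≤ 1) :
    (0 : H →L[ℂ] H) ≤ ∑ i, (Y i) ^ 2 ∧ ∑ i, (Y i) ^ 2 ≤ 1 := by
  have hS_sa : IsSelfAdjoint (∑ i, (Y i) ^ 2) := by
    rw [IsSelfAdjoint, star_sum]
    exact Finset.sum_congr rfl fun i _ => ((hsa i).pow 2).star_eq
  constructor
  · refine Finset.sum_nonneg fun i _ => ?_
    have := star_mul_self_nonneg (Y i)
    rwa [(hsa i).star_eq, ← sq] at this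
  · -- squares of signed sums
    have hsq : ∀ s : Fin d → Bool,
        (∑ i, ((sig (s i) : ℝ) : ℂ) • Y i) ^ 2 ≤ 1 := by
      intro s
      have hε : ∀ i, sig (s i) = 1 ∨ sig (s i) = -1 := fun i => by
        cases s i <;> simp [sig]
      obtain ⟨h1, h2⟩ := hsign (fun i => sig (s i)) hε
      have hA : IsSelfAdjoint (∑ i, ((sig (s i) : ℝ) : ℂ) • Y i) := by
        rw [IsSelfAdjoint, star_sum]
        refine Finset.sum_congr rfl fun i _ => ?_
        rw [star_smul, Complex.star_def, Complex.conj_ofReal, (hsa i).star_eq]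
      exact aux_sq_le_one hA h1 h2
    have hsum : ∑ s : Fin d → Bool, (∑ i, ((sig (s i) : ℝ) : ℂ) • Y i) ^ 2
        ≤ ((2 ^ d : ℝ) : ℂ) • (1 : H →L[ℂ] H) := by
      calc ∑ s : Fin d → Bool, (∑ i, ((sig (s i) : ℝ) : ℂ) • Y i) ^ 2
          ≤ ∑ _s : Fin d → Bool, (1 : H →L[ℂ] H) :=
            Finset.sum_le_sum fun s _ => hsq s
        _ = ((2 ^ d : ℝ) : ℂ) • (1 : H →L[ℂ] H) := by
            rw [Finset.sum_const, Finset.card_univ]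
            rw [← Nat.cast_smul_eq_nsmul ℂ]
            norm_num [Fintype.card_fun]
    rw [key_identity Y] at hsum
    exact smul_le_smul_cancel (by positivity) hS_sa hsum
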